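/- For n ≥ 3, every partial automorphism of the path P_n is a product of elements of the set A = {τ} ∪ {α_i : 1 ≤ i ≤ n−2} (for n ≥ 4; for n = 3 take A = {τ, α₁, α₂}), i.e., A generates the monoid PAut(P_n). -/

import Mathlib

open scoped Classical

/-- `adj u v` means `|u - v| = 1`, i.e. `u` and `v` are adjacent in the path. -/
def adj (u v : ℕ) : Prop := u + 1 = v ∨ v + 1 = u

/-- `f` is an injective partial endomorphism of the path `P_n` on `{1,…,n}`. -/
structure IsIEnd (n : ℕ) (f : ℕ →. ℕ) : Prop where
  dom_subset : f.Dom ⊆ Set.Icc 1 n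
  ran_subset : f.ran ⊆ Set.Icc 1 n
  inj : ∀ ⦃x y a : ℕ⦄, a ∈ f x → a ∈ f y → x = y
  edge : ∀ ⦃u v a b : ℕ⦄, a ∈ f u → b ∈ f v → adj u v → adj a b

/-- `f` is a partial automorphism of the path `P_n`. -/
def IsPAut (n : ℕ) (f : ℕ →. ℕ) : Prop :=
  IsIEnd n f ∧ ∀ ⦃u v a b : ℕ⦄, a ∈ f u → b ∈ f v → adj a b → adj u v

/-- Left-to-right composition of partial maps: `x (pcomp f g) = (x f) g`. -/
def pcomp (f g : ℕ →. ℕ) : ℕ →. ℕ := PFun.comp g f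

/-- The inverse of an injective partial map. -/
noncomputable def pinv (f : ℕ →. ℕ) : ℕ →. ℕ :=
  fun y => ⟨∃ x, y ∈ f x, fun h => h.choose⟩

/-- `I` is an interval of `X`: a set of consecutive integers contained in `X`. -/
def IsIntervalOf (I X : Set ℕ) : Prop :=
  I ⊆ X ∧ ∀ ⦃x⦄, x ∈ I → ∀ ⦃y⦄, y ∈ I → ∀ ⦃z : ℕ⦄, x < z → z < y → z ∈ I

/-- `I` is a maximal interval of `X`. -/
def IsMaxIntervalOf (I X : Set ℕ) : Prop :=
  IsIntervalOf I X ∧ ∀ J, IsIntervalOf J X → I ⊆ J → I = J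

/-- Membership in the submonoid generated by `G` (inside partial maps on `{1,…,n}`,
whose identity element is the identity map on `{1,…,n}`). -/
inductive InClosure (n : ℕ) (G : Set (ℕ →. ℕ)) : (ℕ →. ℕ) → Prop
  | id : InClosure n G (PFun.res id (Set.Icc 1 n))
  | mem {f : ℕ →. ℕ} : f ∈ G → InClosure n G f
  | comp {f g : ℕ →. ℕ} : InClosure n G f → InClosure n G g → InClosure n G (pcomp f g)

/-- The monoid `PAut(P_n)` has rank `r`. -/
def PAutRank (n r : ℕ) : Prop :=
  (∃ G : Set (ℕ →. ℕ), G ⊆ {f | IsPAut n f} ∧ (∀ f, IsPAut n f ↔ InClosure n G f) ∧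
      G.Finite ∧ G.ncard = r) ∧
  ∀ G : Set (ℕ →. ℕ), G ⊆ {f | IsPAut n f} → (∀ f, IsPAut n f ↔ InClosure n G f) →
    r ≤ G.ncard

/-- The monoid `IEnd(P_n)` has rank `r`. -/
def IEndRank (n r : ℕ) : Prop :=
  (∃ G : Set (ℕ →. ℕ), G ⊆ {f | IsIEnd n f} ∧ (∀ f, IsIEnd n f ↔ InClosure n G f) ∧
      G.Finite ∧ G.ncard = r) ∧
  ∀ G : Set (ℕ →. ℕ), G ⊆ {f | IsIEnd n f} → (∀ f, IsIEnd n f ↔ InClosure n G f) →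
    r ≤ G.ncard

/-- The full reversal `τ : x ↦ n - x + 1` on `{1,…,n}`. -/
noncomputable def tauP (n : ℕ) : ℕ →. ℕ := fun x =>
  if x ∈ Set.Icc 1 n then Part.some (n + 1 - x) else Part.none

/-- `α_i`: domain `{1,…,n} \ {i}`, fixes `x < i`, sends `x > i` to `n + i + 1 - x`. -/
noncomputable def alphaMap (n i : ℕ) : ℕ →. ℕ := fun x =>
  if x ∈ Set.Icc 1 n ∧ x ≠ i then
    Part.some (if x < i then x else n + i + 1 - x) else Part.none

/-- `α_i*`: domain `{1,…,n} \ {i}`, sends `x < i` to `i - x`, fixes `x > i`. -/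
noncomputable def alphaStar (n i : ℕ) : ℕ →. ℕ := fun x =>
  if x ∈ Set.Icc 1 n ∧ x ≠ i then
    Part.some (if x < i then i - x else x) else Part.none

/-- The generating set `A`: `{τ, α₁, α₂}` for `n = 3`, and `{τ} ∪ {αᵢ : 1 ≤ i ≤ n-2}`
for `n ≥ 4`. -/
def Agen (n : ℕ) : Set (ℕ →. ℕ) :=
  {tauP n} ∪ {f | ∃ i, 1 ≤ i ∧ i ≤ (if n = 3 then 2 else n - 2) ∧ f = alphaMap n i}

/-! ### Infrastructure -/

def pmap (p : ℕ → Prop) (F : ℕ → ℕ) : ℕ →. ℕ := fun x => ⟨p x, fun _ => F x⟩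

lemma mem_pmap {p : ℕ → Prop} {F : ℕ → ℕ} {a x : ℕ} :
    a ∈ pmap p F x ↔ p x ∧ F x = a := by
  constructor
  · rintro ⟨h, rfl⟩; exact ⟨h, rfl⟩
  · rintro ⟨h, rfl⟩; exact ⟨h, rfl⟩

lemma pmap_ext {p q : ℕ → Prop} {F G : ℕ → ℕ}
    (h1 : ∀ x, p x ↔ q x) (h2 : ∀ x, q x → F x = G x) : pmap p F = pmap q G := by
  funext x
  apply Part.ext
  intro a
  rw [mem_pmap, mem_pmap]
  constructor
  · rintro ⟨h, rfl⟩; exact ⟨(h1 x).1 h, (h2 x ((h1 x).1 h)).symm⟩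
  · rintro ⟨h, rfl⟩; exact ⟨(h1 x).2 h, h2 x h⟩

lemma pcomp_pmap {p q : ℕ → Prop} {F G : ℕ → ℕ} :
    pcomp (pmap p F) (pmap q G) = pmap (fun x => p x ∧ q (F x)) (fun x => G (F x)) := by
  funext x
  apply Part.ext
  intro a
  rw [mem_pmap, pcomp, PFun.comp_apply]; refine Part.mem_bind_iff.trans ?_
  constructor
  · rintro ⟨b, hb, ha⟩
    rw [mem_pmap] at hb ha
    obtain ⟨hp, rfl⟩ := hb
    obtain ⟨hq, rfl⟩ := ha
    exact ⟨⟨hp, hq⟩, rfl⟩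
  · rintro ⟨⟨hp, hq⟩, rfl⟩
    exact ⟨F x, mem_pmap.2 ⟨hp, rfl⟩, mem_pmap.2 ⟨hq, rfl⟩⟩

lemma part_eq_of_mem_iff {p q : Part ℕ} (h : ∀ a, a ∈ p ↔ a ∈ q) : p = q := Part.ext h

lemma tauP_eq (n : ℕ) : tauP n = pmap (fun x => 1 ≤ x ∧ x ≤ n) (fun x => n + 1 - x) := by
  funext x
  apply Part.ext
  intro a
  rw [mem_pmap, tauP]
  split_ifs with h
  · simp only [Set.mem_Icc] at h
    rw [Part.mem_some_iff]
    constructor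
    · rintro rfl; exact ⟨h, rfl⟩
    · rintro ⟨_, rfl⟩; rfl
  · simp only [Set.mem_Icc] at h
    constructor
    · intro hh; exact absurd hh (Part.notMem_none a)
    · rintro ⟨h1, _⟩; exact absurd h1 h

lemma alphaMap_eq (n i : ℕ) : alphaMap n i =
    pmap (fun x => (1 ≤ x ∧ x ≤ n) ∧ x ≠ i) (fun x => if x < i then x else n + i + 1 - x) := by
  funext x
  apply Part.ext
  intro a
  rw [mem_pmap, alphaMap]
  by_cases h : x ∈ Set.Icc 1 n ∧ x ≠ i
  · rw [if_pos h]
    simp only [Set.mem_Icc] at h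
    rw [Part.mem_some_iff]
    constructor
    · rintro rfl; exact ⟨h, rfl⟩
    · rintro ⟨_, rfl⟩; rfl
  · rw [if_neg h]
    simp only [Set.mem_Icc] at h
    constructor
    · intro hh; exact absurd hh (Part.notMem_none a)
    · rintro ⟨h1, _⟩; exact absurd h1 h

lemma alphaStar_eq (n i : ℕ) : alphaStar n i =
    pmap (fun x => (1 ≤ x ∧ x ≤ n) ∧ x ≠ i) (fun x => if x < i then i - x else x) := by
  funext x
  apply Part.ext
  intro a
  rw [mem_pmap, alphaStar]
  by_cases h : x ∈ Set.Icc 1 n ∧ x ≠ i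
  · rw [if_pos h]
    simp only [Set.mem_Icc] at h
    rw [Part.mem_some_iff]
    constructor
    · rintro rfl; exact ⟨h, rfl⟩
    · rintro ⟨_, rfl⟩; rfl
  · rw [if_neg h]
    simp only [Set.mem_Icc] at h
    constructor
    · intro hh; exact absurd hh (Part.notMem_none a)
    · rintro ⟨h1, _⟩; exact absurd h1 h

lemma res_id_eq (n : ℕ) :
    PFun.res id (Set.Icc 1 n) = pmap (fun x => 1 ≤ x ∧ x ≤ n) (fun x => x) := by
  funext x
  apply Part.ext
  intro a
  rw [mem_pmap, PFun.mem_res]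
  simp only [Set.mem_Icc, id_eq]
  try tauto

/-- value of a partial map -/
noncomputable def fval (f : ℕ →. ℕ) (x : ℕ) : ℕ :=
  if h : (f x).Dom then (f x).get h else 0

lemma fval_mem {f : ℕ →. ℕ} {x : ℕ} (h : (f x).Dom) : fval f x ∈ f x := by
  rw [fval, dif_pos h]; exact Part.get_mem h

lemma mem_iff_fval {f : ℕ →. ℕ} {x a : ℕ} : a ∈ f x ↔ (f x).Dom ∧ fval f x = a := by
  constructor
  · intro h
    have hd : (f x).Dom := Part.dom_iff_mem.2 ⟨a, h⟩
    exact ⟨hd, Part.mem_unique (fval_mem hd) h⟩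
  · rintro ⟨h, rfl⟩; exact fval_mem h

lemma canon (f : ℕ →. ℕ) : f = pmap (fun x => (f x).Dom) (fval f) := by
  funext x
  apply Part.ext
  intro a
  rw [mem_pmap, mem_iff_fval]

/-! ### Soundness -/

lemma isPAut_pmap {n : ℕ} {p : ℕ → Prop} {F : ℕ → ℕ}
    (hd : ∀ x, p x → 1 ≤ x ∧ x ≤ n ∧ 1 ≤ F x ∧ F x ≤ n)
    (hinj : ∀ x y, p x → p y → F x = F y → x = y)
    (hadj : ∀ x y, p x → p y → (adj x y ↔ adj (F x) (F y))) :
    IsPAut n (pmap p F) := by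
  constructor
  · constructor
    · intro x hx
      have hx' : p x := hx
      exact Set.mem_Icc.2 ⟨(hd x hx').1, (hd x hx').2.1⟩
    · rintro y ⟨x, hx⟩
      rw [mem_pmap] at hx
      obtain ⟨hp, rfl⟩ := hx
      exact Set.mem_Icc.2 ⟨(hd x hp).2.2.1, (hd x hp).2.2.2⟩
    · intro x y a hx hy
      rw [mem_pmap] at hx hy
      obtain ⟨hpx, hax⟩ := hx
      obtain ⟨hpy, hay⟩ := hy
      exact hinj x y hpx hpy (hax.trans hay.symm)
    · intro u v a b ha hb huv
      rw [mem_pmap] at ha hb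
      obtain ⟨hpu, rfl⟩ := ha
      obtain ⟨hpv, rfl⟩ := hb
      exact (hadj u v hpu hpv).1 huv
  · intro u v a b ha hb hab
    rw [mem_pmap] at ha hb
    obtain ⟨hpu, rfl⟩ := ha
    obtain ⟨hpv, rfl⟩ := hb
    exact (hadj u v hpu hpv).2 hab

lemma isPAut_tau (n : ℕ) : IsPAut n (tauP n) := by
  rw [tauP_eq]
  apply isPAut_pmap
  · intro x hx; omega
  · intro x y hx hy h; omega
  · intro x y hx hy; unfold adj; omega

lemma isPAut_alpha (n i : ℕ) : IsPAut n (alphaMap n i) := by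
  rw [alphaMap_eq]
  apply isPAut_pmap
  · intro x hx; split_ifs <;> omega
  · intro x y hx hy h; split_ifs at h <;> omega
  · intro x y hx hy; unfold adj; split_ifs <;> omega

lemma isPAut_res_id (n : ℕ) : IsPAut n (PFun.res id (Set.Icc 1 n)) := by
  rw [res_id_eq]
  apply isPAut_pmap
  · intro x hx; omega
  · intro x y _ _ h; omega
  · intro x y _ _; rfl

lemma isPAut_pcomp {n : ℕ} {f g : ℕ →. ℕ} (hf : IsPAut n f) (hg : IsPAut n g) :
    IsPAut n (pcomp f g) := by
  have hmem : ∀ {a x : ℕ}, a ∈ pcomp f g x ↔ ∃ b, b ∈ f x ∧ a ∈ g b := by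
    intro a x
    rw [pcomp, PFun.comp_apply]; exact Part.mem_bind_iff
  constructor
  · constructor
    · intro x hx
      obtain ⟨a, ha⟩ := Part.dom_iff_mem.1 hx
      obtain ⟨b, hb, _⟩ := hmem.1 ha
      exact hf.1.dom_subset (Part.dom_iff_mem.2 ⟨b, hb⟩)
    · rintro y ⟨x, hx⟩
      obtain ⟨b, _, hy⟩ := hmem.1 hx
      exact hg.1.ran_subset ⟨b, hy⟩
    · intro x y a hx hy
      obtain ⟨b1, hb1, ha1⟩ := hmem.1 hx
      obtain ⟨b2, hb2, ha2⟩ := hmem.1 hy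
      have : b1 = b2 := hg.1.inj ha1 ha2
      subst this
      exact hf.1.inj hb1 hb2
    · intro u v a b ha hb huv
      obtain ⟨b1, hb1, ha1⟩ := hmem.1 ha
      obtain ⟨b2, hb2, ha2⟩ := hmem.1 hb
      exact hg.1.edge ha1 ha2 (hf.1.edge hb1 hb2 huv)
  · intro u v a b ha hb hab
    obtain ⟨b1, hb1, ha1⟩ := hmem.1 ha
    obtain ⟨b2, hb2, ha2⟩ := hmem.1 hb
    exact hf.2 hb1 hb2 (hg.2 ha1 ha2 hab)

lemma sound {n : ℕ} {f : ℕ →. ℕ} (h : InClosure n (Agen n) f) : IsPAut n f := by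
  induction h with
  | id => exact isPAut_res_id n
  | mem hf =>
    rcases hf with hf | ⟨i, _, _, rfl⟩
    · rw [Set.mem_singleton_iff] at hf; subst hf; exact isPAut_tau n
    · exact isPAut_alpha n _
  | comp hf hg ihf ihg => exact isPAut_pcomp ihf ihg

/-! ### Membership toolkit -/

lemma mem_tau (n : ℕ) : InClosure n (Agen n) (tauP n) :=
  InClosure.mem (Or.inl rfl)

lemma mem_alpha {n i : ℕ} (h1 : 1 ≤ i) (h2 : i ≤ n - 2 ∨ (n = 3 ∧ i ≤ 2)) :
    InClosure n (Agen n) (alphaMap n i) := by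
  apply InClosure.mem
  right
  refine ⟨i, h1, ?_, rfl⟩
  split_ifs with h <;> omega

/-- the identity restricted to points of `[1,n]` satisfying `P` -/
def idP (n : ℕ) (P : ℕ → Prop) : ℕ →. ℕ :=
  pmap (fun x => (1 ≤ x ∧ x ≤ n) ∧ P x) (fun x => x)

lemma mem_e {n i : ℕ} (hn : 3 ≤ n) (h1 : 1 ≤ i) (h2 : i ≤ n - 2 ∨ (n = 3 ∧ i ≤ 2)) :
    InClosure n (Agen n) (idP n (fun x => x ≠ i)) := by
  have heq : idP n (fun x => x ≠ i) = pcomp (alphaMap n i) (alphaMap n i) := by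
    rw [alphaMap_eq, pcomp_pmap, idP]
    apply pmap_ext
    · intro x; constructor
      · rintro ⟨hx, hxi⟩
        refine ⟨⟨hx, hxi⟩, ?_⟩
        split_ifs <;> omega
      · rintro ⟨⟨hx, hxi⟩, _⟩; exact ⟨hx, hxi⟩
    · intro x ⟨⟨hx, hxi⟩, h⟩
      split_ifs at h ⊢ <;> omega
  rw [heq]
  exact InClosure.comp (mem_alpha h1 h2) (mem_alpha h1 h2)

lemma mem_e' {n i : ℕ} (hn : 3 ≤ n) (h1 : 1 ≤ i) (h2 : i ≤ n) :
    InClosure n (Agen n) (idP n (fun x => x ≠ i)) := by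
  by_cases hc : i ≤ n - 2 ∨ (n = 3 ∧ i ≤ 2)
  · exact mem_e hn h1 hc
  · -- i ∈ {n-1, n}; use τ ∘ e_{n+1-i} ∘ τ
    set j := n + 1 - i with hj
    have hjc : j ≤ n - 2 ∨ (n = 3 ∧ j ≤ 2) := by omega
    have hj1 : 1 ≤ j := by omega
    have heq : idP n (fun x => x ≠ i) =
        pcomp (pcomp (tauP n) (idP n (fun x => x ≠ j))) (tauP n) := by
      rw [tauP_eq, idP, idP, pcomp_pmap, pcomp_pmap]
      apply pmap_ext
      · intro x; constructor
        · rintro ⟨hx, hxi⟩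
          refine ⟨⟨⟨hx.1, hx.2⟩, ?_⟩, ?_⟩ <;> omega
        · rintro ⟨⟨hx, hc2⟩, hc3⟩
          constructor
          · exact hx
          · omega
      · intro x _; omega
    rw [heq]
    exact InClosure.comp (InClosure.comp (mem_tau n) (mem_e hn hj1 hjc)) (mem_tau n)

lemma mem_idP_finset {n : ℕ} (hn : 3 ≤ n) (T : Finset ℕ) :
    InClosure n (Agen n) (pmap (fun x => (1 ≤ x ∧ x ≤ n) ∧ x ∉ T) (fun x => x)) := by
  induction T using Finset.induction_on with
  | empty =>
    have : pmap (fun x => (1 ≤ x ∧ x ≤ n) ∧ x ∉ (∅ : Finset ℕ)) (fun x : ℕ => x) =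
        PFun.res id (Set.Icc 1 n) := by
      rw [res_id_eq]
      apply pmap_ext
      · intro x; simp
      · intro x _; rfl
    rw [this]; exact InClosure.id
  | @insert a s ha ih =>
    by_cases hain : 1 ≤ a ∧ a ≤ n
    · have heq : pmap (fun x => (1 ≤ x ∧ x ≤ n) ∧ x ∉ insert a s) (fun x : ℕ => x) =
          pcomp (pmap (fun x => (1 ≤ x ∧ x ≤ n) ∧ x ∉ s) (fun x => x))
            (idP n (fun x => x ≠ a)) := by
        rw [idP, pcomp_pmap]
        apply pmap_ext
        · intro x
          simp only [Finset.mem_insert]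
          tauto
        · intro x _; rfl
      rw [heq]
      exact InClosure.comp ih (mem_e' hn hain.1 hain.2)
    · have heq : pmap (fun x => (1 ≤ x ∧ x ≤ n) ∧ x ∉ insert a s) (fun x : ℕ => x) =
          pmap (fun x => (1 ≤ x ∧ x ≤ n) ∧ x ∉ s) (fun x => x) := by
        apply pmap_ext
        · intro x
          simp only [Finset.mem_insert]
          constructor
          · rintro ⟨hx, hxs⟩; exact ⟨hx, fun hh => hxs (Or.inr hh)⟩
          · rintro ⟨hx, hxs⟩
            refine ⟨hx, ?_⟩
            rintro (rfl | hh)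
            · exact hain ⟨hx.1, hx.2⟩
            · exact hxs hh
        · intro x _; rfl
      rw [heq]; exact ih

lemma mem_idP {n : ℕ} (hn : 3 ≤ n) (P : ℕ → Prop) :
    InClosure n (Agen n) (idP n P) := by
  classical
  have heq : idP n P =
      pmap (fun x => (1 ≤ x ∧ x ≤ n) ∧
        x ∉ (Finset.Icc 1 n).filter (fun x => ¬ P x)) (fun x => x) := by
    rw [idP]
    apply pmap_ext
    · intro x
      simp only [Finset.mem_filter, Finset.mem_Icc]
      tauto
    · intro x _; rfl
  rw [heq]
  exact mem_idP_finset hn _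

/-- shift up by `t` -/
def sUp (n t : ℕ) : ℕ →. ℕ := pmap (fun x => 1 ≤ x ∧ x + t ≤ n) (fun x => x + t)

/-- shift down by `t` -/
def sDn (n t : ℕ) : ℕ →. ℕ := pmap (fun x => 1 + t ≤ x ∧ x ≤ n) (fun x => x - t)

lemma mem_sUp {n : ℕ} (hn : 3 ≤ n) (t : ℕ) : InClosure n (Agen n) (sUp n t) := by
  induction t with
  | zero =>
    have : sUp n 0 = PFun.res id (Set.Icc 1 n) := by
      rw [res_id_eq, sUp]
      apply pmap_ext
      · intro x; omega
      · intro x _; omega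
    rw [this]; exact InClosure.id
  | succ t ih =>
    have h1 : sUp n 1 = pcomp (tauP n) (alphaMap n 1) := by
      rw [tauP_eq, alphaMap_eq, pcomp_pmap, sUp]
      apply pmap_ext
      · intro x; omega
      · intro x hx; split_ifs <;> omega
    have h2 : sUp n (t + 1) = pcomp (sUp n t) (sUp n 1) := by
      rw [sUp, sUp, sUp, pcomp_pmap]
      apply pmap_ext
      · intro x; omega
      · intro x _; omega
    rw [h2, h1]
    exact InClosure.comp ih (InClosure.comp (mem_tau n) (mem_alpha le_rfl (by omega)))

lemma mem_sDn {n : ℕ} (hn : 3 ≤ n) (t : ℕ) : InClosure n (Agen n) (sDn n t) := by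
  induction t with
  | zero =>
    have : sDn n 0 = PFun.res id (Set.Icc 1 n) := by
      rw [res_id_eq, sDn]
      apply pmap_ext
      · intro x; omega
      · intro x _; omega
    rw [this]; exact InClosure.id
  | succ t ih =>
    have h1 : sDn n 1 = pcomp (alphaMap n 1) (tauP n) := by
      rw [tauP_eq, alphaMap_eq, pcomp_pmap, sDn]
      apply pmap_ext
      · intro x; split_ifs <;> omega
      · intro x hx; split_ifs at hx ⊢ <;> omega
    have h2 : sDn n (t + 1) = pcomp (sDn n t) (sDn n 1) := by
      rw [sDn, sDn, sDn, pcomp_pmap]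
      apply pmap_ext
      · intro x; omega
      · intro x _; omega
    rw [h2, h1]
    exact InClosure.comp ih (InClosure.comp (mem_alpha le_rfl (by omega)) (mem_tau n))

lemma mem_alphaStar {n j : ℕ} (hn : 3 ≤ n) (h3 : 3 ≤ j) (hjn : j ≤ n) :
    InClosure n (Agen n) (alphaStar n j) := by
  have heq : alphaStar n j = pcomp (pcomp (tauP n) (alphaMap n (n + 1 - j))) (tauP n) := by
    rw [tauP_eq, alphaMap_eq, alphaStar_eq, pcomp_pmap, pcomp_pmap]
    apply pmap_ext
    · intro x; split_ifs <;> omega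
    · intro x hx; split_ifs at hx ⊢ <;> omega
  rw [heq]
  refine InClosure.comp (InClosure.comp (mem_tau n) (mem_alpha (by omega) (by omega))) (mem_tau n)

/-- reflection at pivot `v` : identity below `v`, reflect `(v, n]` onto the top;
`v = 0` gives `τ`. -/
def flipAt (n v : ℕ) : ℕ →. ℕ :=
  pmap (fun x => (1 ≤ x ∧ x ≤ n) ∧ x ≠ v) (fun x => if x < v then x else n + v + 1 - x)

lemma mem_flipAt {n v : ℕ} (hn : 3 ≤ n) (hv : v ≤ n - 2) :
    InClosure n (Agen n) (flipAt n v) := by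
  rcases Nat.eq_zero_or_pos v with rfl | hv1
  · have : flipAt n 0 = tauP n := by
      rw [tauP_eq, flipAt]
      apply pmap_ext
      · intro x; omega
      · intro x _; split_ifs <;> omega
    rw [this]; exact mem_tau n
  · have : flipAt n v = alphaMap n v := by rw [alphaMap_eq, flipAt]
    rw [this]; exact mem_alpha hv1 (Or.inl hv)

/-! ### Block structure -/

lemma block_affine {n : ℕ} {f : ℕ →. ℕ} (hf : IsPAut n f) {x1 x2 : ℕ}
    (hle : x1 ≤ x2) (hall : ∀ y, x1 ≤ y → y ≤ x2 → (f y).Dom) :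
    (∀ y, x1 ≤ y → y ≤ x2 → fval f y = fval f x1 + (y - x1)) ∨
    (x1 < x2 ∧ ∀ y, x1 ≤ y → y ≤ x2 → fval f y + (y - x1) = fval f x1) := by
  rcases eq_or_lt_of_le hle with rfl | hlt
  · left; intro y h1 h2
    have : y = x1 := le_antisymm h2 h1
    subst this; omega
  · have step : ∀ y, x1 ≤ y → y < x2 → adj (fval f y) (fval f (y + 1)) := by
      intro y h1 h2
      exact hf.1.edge (fval_mem (hall y h1 (by omega)))
        (fval_mem (hall (y + 1) (by omega) (by omega))) (Or.inl rfl)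
    have inj' : ∀ y z, x1 ≤ y → y ≤ x2 → x1 ≤ z → z ≤ x2 → fval f y = fval f z → y = z := by
      intro y z hy1 hy2 hz1 hz2 hyz
      refine hf.1.inj (a := fval f y) (fval_mem (hall y hy1 hy2)) ?_
      rw [hyz]; exact fval_mem (hall z hz1 hz2)
    have hbase0 := step x1 le_rfl hlt
    rcases hbase0 with hbase | hbase
    · -- increasing
      left
      have claim : ∀ k, x1 + k ≤ x2 → fval f (x1 + k) = fval f x1 + k := by
        intro k
        induction k using Nat.strong_induction_on with
        | _ k IH =>
          match k with
          | 0 => intro _; simp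
          | Nat.succ k' =>
            intro hk
            have e1 : x1 + (k' + 1) = (x1 + k') + 1 := by omega
            rw [e1]
            have hk' := IH k' (by omega) (by omega)
            rcases step (x1 + k') (by omega) (by omega) with h | h
            · omega
            · exfalso
              rcases Nat.eq_zero_or_pos k' with rfl | hkpos
              · simp only [Nat.add_zero] at h hk'
                -- hbase already an equation
                omega
              · have hkm := IH (k' - 1) (by omega) (by omega)
                have heq2 : fval f (x1 + k' + 1) = fval f (x1 + (k' - 1)) := by omega
                have := inj' (x1 + k' + 1) (x1 + (k' - 1)) (by omega) (by omega)
                  (by omega) (by omega) heq2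
                omega
      intro y h1 h2
      have := claim (y - x1) (by omega)
      rw [show x1 + (y - x1) = y by omega] at this
      omega
    · -- decreasing
      right
      refine ⟨hlt, ?_⟩
      have claim : ∀ k, x1 + k ≤ x2 → fval f (x1 + k) + k = fval f x1 := by
        intro k
        induction k using Nat.strong_induction_on with
        | _ k IH =>
          match k with
          | 0 => intro _; simp
          | Nat.succ k' =>
            intro hk
            have e1 : x1 + (k' + 1) = (x1 + k') + 1 := by omega
            rw [e1]
            have hk' := IH k' (by omega) (by omega)
            rcases step (x1 + k') (by omega) (by omega) with h | h
            · exfalso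
              rcases Nat.eq_zero_or_pos k' with rfl | hkpos
              · simp only [Nat.add_zero] at h hk'
                -- hbase already an equation
                omega
              · have hkm := IH (k' - 1) (by omega) (by omega)
                have heq2 : fval f (x1 + k' + 1) = fval f (x1 + (k' - 1)) := by omega
                have := inj' (x1 + k' + 1) (x1 + (k' - 1)) (by omega) (by omega)
                  (by omega) (by omega) heq2
                omega
            · omega
      intro y h1 h2
      have := claim (y - x1) (by omega)
      rw [show x1 + (y - x1) = y by omega] at this
      omega

lemma top_block {n : ℕ} {f : ℕ →. ℕ} (hf : IsPAut n f) {w0 : ℕ} (hw0 : (f w0).Dom) :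
    ∃ x1 x2 c r : ℕ, 1 ≤ x1 ∧ x1 ≤ x2 ∧ x2 ≤ n ∧
      (∀ y, x1 ≤ y → y ≤ x2 → (f y).Dom) ∧
      ¬ (f (x2 + 1)).Dom ∧ ¬ (f (x1 - 1)).Dom ∧
      c + (x2 - x1) = r ∧ 1 ≤ c ∧ r ≤ n ∧
      ((∀ y, x1 ≤ y → y ≤ x2 → fval f y = c + (y - x1)) ∨
        (x1 < x2 ∧ ∀ y, x1 ≤ y → y ≤ x2 → fval f y = r - (y - x1))) ∧
      (∀ z, (f z).Dom → fval f z ≤ r) ∧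
      (∀ z, (f z).Dom → (z < x1 ∨ x2 < z) → fval f z + 2 ≤ c) := by
  classical
  have hdomIcc : ∀ z, (f z).Dom → 1 ≤ z ∧ z ≤ n := by
    intro z hz
    have := hf.1.dom_subset hz
    simpa [Set.mem_Icc] using this
  have hranIcc : ∀ z, (f z).Dom → 1 ≤ fval f z ∧ fval f z ≤ n := by
    intro z hz
    have := hf.1.ran_subset ⟨z, fval_mem hz⟩
    simpa [Set.mem_Icc] using this
  set Df := (Finset.Icc 1 n).filter (fun x => (f x).Dom) with hDf
  have hmemDf : ∀ z, z ∈ Df ↔ (f z).Dom := by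
    intro z
    simp only [hDf, Finset.mem_filter, Finset.mem_Icc]
    exact ⟨fun h => h.2, fun h => ⟨hdomIcc z h, h⟩⟩
  have hDfne : Df.Nonempty := ⟨w0, (hmemDf w0).2 hw0⟩
  have hRne : (Df.image (fval f)).Nonempty := hDfne.image _
  set r := (Df.image (fval f)).max' hRne with hr
  obtain ⟨w, hwD, hwr⟩ := Finset.mem_image.1 ((Df.image (fval f)).max'_mem hRne)
  have hwDom : (f w).Dom := (hmemDf w).1 hwD
  have hmax : ∀ z, (f z).Dom → fval f z ≤ r := by
    intro z hz
    exact Finset.le_max' _ _ (Finset.mem_image.2 ⟨z, (hmemDf z).2 hz, rfl⟩)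
  -- block around w
  set K := Nat.findGreatest (fun k => ∀ j, j ≤ k → (f (w + j)).Dom) n with hK
  set K' := Nat.findGreatest (fun k => ∀ j, j ≤ k → (f (w - j)).Dom) n with hK'
  have hP0 : ∀ j, j ≤ 0 → (f (w + j)).Dom := by
    intro j hj; interval_cases j; simpa using hwDom
  have hP0' : ∀ j, j ≤ 0 → (f (w - j)).Dom := by
    intro j hj; interval_cases j; simpa using hwDom
  have hPK : ∀ j, j ≤ K → (f (w + j)).Dom := by
    have h := Nat.findGreatest_spec (P := fun k => ∀ j, j ≤ k → (f (w + j)).Dom)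
      (Nat.zero_le n) hP0
    simpa [← hK] using h
  have hPK' : ∀ j, j ≤ K' → (f (w - j)).Dom := by
    have h := Nat.findGreatest_spec (P := fun k => ∀ j, j ≤ k → (f (w - j)).Dom)
      (Nat.zero_le n) hP0'
    simpa [← hK'] using h
  have hKlt : K < n := by
    rcases lt_or_ge K n with h | h
    · exact h
    · exfalso
      have hKn : K = n := le_antisymm (Nat.findGreatest_le n) h
      have := hdomIcc (w + n) (hPK n (by omega))
      have := hdomIcc w hwDom
      omega
  have hK'w : K' < w := by
    rcases lt_or_ge K' w with h | h
    · exact h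
    · exfalso
      have h0 : (f (w - w)).Dom := hPK' w (by
        have := hdomIcc w hwDom; omega)
      simp only [Nat.sub_self] at h0
      have := hdomIcc 0 h0
      omega
  set x2 := w + K with hx2
  set x1 := w - K' with hx1
  have hx2top : ¬ (f (x2 + 1)).Dom := by
    intro hd
    have hgr := Nat.findGreatest_is_greatest (P := fun k => ∀ j, j ≤ k → (f (w + j)).Dom)
      (n := n) (k := K + 1) (by omega) (by omega)
    apply hgr
    intro j hj
    rcases Nat.lt_or_ge j (K + 1) with h | h
    · exact hPK j (by omega)
    · have : j = K + 1 := by omega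
      subst this
      rw [show w + (K + 1) = x2 + 1 by omega]; exact hd
  have hx1bot : ¬ (f (x1 - 1)).Dom := by
    intro hd
    have hK'n : K' + 1 ≤ n := by
      have := hdomIcc w hwDom; omega
    have hgr := Nat.findGreatest_is_greatest (P := fun k => ∀ j, j ≤ k → (f (w - j)).Dom)
      (n := n) (k := K' + 1) (by omega) hK'n
    apply hgr
    intro j hj
    rcases Nat.lt_or_ge j (K' + 1) with h | h
    · exact hPK' j (by omega)
    · have : j = K' + 1 := by omega
      subst this
      have : w - (K' + 1) = x1 - 1 := by omega
      rw [this]; exact hd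
  have hall : ∀ y, x1 ≤ y → y ≤ x2 → (f y).Dom := by
    intro y h1 h2
    rcases Nat.lt_or_ge y w with h | h
    · have : y = w - (w - y) := by omega
      rw [this]; exact hPK' (w - y) (by omega)
    · have : y = w + (y - w) := by omega
      rw [this]; exact hPK (y - w) (by omega)
  have hx11 : 1 ≤ x1 := (hdomIcc x1 (hall x1 le_rfl (by omega))).1
  have hx1le : x1 ≤ x2 := by omega
  have hx2n : x2 ≤ n := (hdomIcc x2 (hall x2 (by omega) le_rfl)).2
  have hwin : x1 ≤ w ∧ w ≤ x2 := by omega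
  rcases block_affine hf hx1le hall with Ha | ⟨hlt, Hd⟩
  · -- increasing block
    set c := fval f x1 with hc
    have hrx2 : r = fval f x2 := by
      have h1 : fval f w ≤ fval f x2 := by
        have := Ha w hwin.1 hwin.2
        have := Ha x2 hx1le le_rfl
        omega
      have h2 : fval f x2 ≤ r := hmax x2 (hall x2 hx1le le_rfl)
      omega
    have hcr : c + (x2 - x1) = r := by
      have := Ha x2 hx1le le_rfl
      omega
    refine ⟨x1, x2, c, r, hx11, hx1le, hx2n, hall, hx2top, hx1bot, hcr,
      (hranIcc x1 (hall x1 le_rfl hx1le)).1, ?_, ?_, hmax, ?_⟩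
    · rw [hrx2]
      exact (hranIcc x2 (hall x2 hx1le le_rfl)).2
    · left
      intro y h1 h2
      have := Ha y h1 h2
      omega
    · -- outside bound
      intro z hz hout
      have hzr : fval f z ≤ r := hmax z hz
      have hnotin : ¬ (c ≤ fval f z ∧ fval f z ≤ r) := by
        rintro ⟨hc1, hc2⟩
        set y := x1 + (fval f z - c) with hy
        have hy2 : y ≤ x2 := by omega
        have hvy : fval f y = fval f z := by
          have := Ha y (by omega) hy2
          omega
        have : y = z := hf.1.inj (a := fval f y) (fval_mem (hall y (by omega) hy2))
          (by rw [hvy]; exact fval_mem hz)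
        omega
      have hne : fval f z + 1 ≠ c := by
        intro hh
        have hadj : adj (fval f z) (fval f x1) := by
          left; rw [hc] at hh; omega
        have := hf.2 (fval_mem hz) (fval_mem (hall x1 le_rfl hx1le)) hadj
        rcases this with h | h
        · -- z + 1 = x1, so z = x1 - 1
          have : z = x1 - 1 := by omega
          subst this; exact hx1bot hz
        · -- x1 + 1 = z
          rcases hout with h' | h'
          · omega
          · have hz2 : z = x2 + 1 := by omega
            rw [hz2] at hz
            exact hx2top hz
      have h1z := (hranIcc z hz).1
      omega
  · -- decreasing block
    set c := fval f x2 with hc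
    have hrx1 : r = fval f x1 := by
      have h1 : fval f w ≤ fval f x1 := by
        have := Hd w hwin.1 hwin.2
        omega
      have h2 : fval f x1 ≤ r := hmax x1 (hall x1 le_rfl hx1le)
      omega
    have hcr : c + (x2 - x1) = r := by
      have := Hd x2 hx1le le_rfl
      omega
    refine ⟨x1, x2, c, r, hx11, hx1le, hx2n, hall, hx2top, hx1bot, hcr,
      (hranIcc x2 (hall x2 hx1le le_rfl)).1, ?_, ?_, hmax, ?_⟩
    · rw [hrx1]
      exact (hranIcc x1 (hall x1 le_rfl hx1le)).2
    · right
      refine ⟨hlt, ?_⟩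
      intro y h1 h2
      have := Hd y h1 h2
      omega
    · intro z hz hout
      have hzr : fval f z ≤ r := hmax z hz
      have hnotin : ¬ (c ≤ fval f z ∧ fval f z ≤ r) := by
        rintro ⟨hc1, hc2⟩
        set y := x1 + (r - fval f z) with hy
        have hy2 : y ≤ x2 := by omega
        have hvy : fval f y = fval f z := by
          have := Hd y (by omega) hy2
          omega
        have : y = z := hf.1.inj (a := fval f y) (fval_mem (hall y (by omega) hy2))
          (by rw [hvy]; exact fval_mem hz)
        omega
      have hne : fval f z + 1 ≠ c := by
        intro hh
        have hadj : adj (fval f z) (fval f x2) := by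
          left; rw [hc] at hh; omega
        have := hf.2 (fval_mem hz) (fval_mem (hall x2 hx1le le_rfl)) hadj
        rcases this with h | h
        · -- z + 1 = x2: z inside
          have : z = x2 - 1 := by omega
          omega
        · -- x2 + 1 = z
          have : z = x2 + 1 := by omega
          subst this; exact hx2top hz
      have h1z := (hranIcc z hz).1
      omega

/-! ### Interval case -/

lemma interval_case {n : ℕ} (hn : 3 ≤ n) {f : ℕ →. ℕ}
    {x1 x2 c r : ℕ} (hx11 : 1 ≤ x1) (hx1le : x1 ≤ x2) (hx2n : x2 ≤ n)
    (hdom : ∀ y, (f y).Dom ↔ (x1 ≤ y ∧ y ≤ x2))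
    (hcr : c + (x2 - x1) = r) (hc1 : 1 ≤ c) (hrn : r ≤ n)
    (haff : (∀ y, x1 ≤ y → y ≤ x2 → fval f y = c + (y - x1)) ∨
      (x1 < x2 ∧ ∀ y, x1 ≤ y → y ≤ x2 → fval f y = r - (y - x1))) :
    InClosure n (Agen n) f := by
  rcases haff with Ha | ⟨hlt, Hd⟩
  · have heq : f = pcomp (pcomp (idP n (fun x => x1 ≤ x ∧ x ≤ x2)) (sUp n (n - x2)))
        (sDn n (n - r)) := by
      rw [canon f, idP, sUp, sDn, pcomp_pmap, pcomp_pmap]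
      apply pmap_ext
      · intro x; rw [hdom x]; omega
      · intro x hx
        rw [Ha x (by omega) (by omega)]
        omega
    rw [heq]
    exact InClosure.comp (InClosure.comp (mem_idP hn _) (mem_sUp hn _)) (mem_sDn hn _)
  · set l := x2 - x1 + 1 with hl
    have heq : f = pcomp (pcomp (pcomp (idP n (fun x => x1 ≤ x ∧ x ≤ x2))
        (sUp n (n - x2))) (flipAt n (n - l))) (sDn n (n - r)) := by
      rw [canon f, idP, sUp, sDn, flipAt, pcomp_pmap, pcomp_pmap, pcomp_pmap]
      apply pmap_ext
      · intro x; rw [hdom x]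
        constructor
        · intro hx
          have h1 : ¬ (x + (n - x2) < n - l) := by omega
          rw [if_neg h1]
          omega
        · rintro ⟨⟨⟨⟨-, hx⟩, -⟩, -⟩, -⟩
          exact hx
      · intro x hx
        obtain ⟨⟨⟨⟨-, hx'⟩, -⟩, -⟩, -⟩ := hx
        rw [Hd x hx'.1 hx'.2]
        have h1 : ¬ (x + (n - x2) < n - l) := by omega
        rw [if_neg h1]
        omega
    rw [heq]
    refine InClosure.comp (InClosure.comp (InClosure.comp (mem_idP hn _) (mem_sUp hn _))
      (mem_flipAt hn (by omega))) (mem_sDn hn _)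

/-! ### Embedding P_m into P_n (identity on the top block) -/

noncomputable def extTop (n m : ℕ) (φ : ℕ →. ℕ) : ℕ →. ℕ :=
  fun x => if m + 2 ≤ x ∧ x ≤ n then Part.some x else φ x

lemma extTop_pmap {n m : ℕ} {p : ℕ → Prop} {F : ℕ → ℕ} (hp : ∀ x, p x → x ≤ m) :
    extTop n m (pmap p F) =
      pmap (fun x => p x ∨ (m + 2 ≤ x ∧ x ≤ n)) (fun x => if x ≤ m then F x else x) := by
  funext x
  apply Part.ext
  intro a
  by_cases htop : m + 2 ≤ x ∧ x ≤ n
  · rw [extTop, if_pos htop, Part.mem_some_iff, mem_pmap]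
    constructor
    · rintro rfl
      refine ⟨Or.inr htop, ?_⟩
      rw [if_neg (by omega)]
    · rintro ⟨h, rfl⟩
      rw [if_neg (by omega)]
  · rw [extTop, if_neg htop, mem_pmap, mem_pmap]
    constructor
    · rintro ⟨h, rfl⟩
      refine ⟨Or.inl h, ?_⟩
      rw [if_pos (hp x h)]
    · rintro ⟨h, rfl⟩
      rcases h with h | h
      · exact ⟨h, by rw [if_pos (hp x h)]⟩
      · exact absurd h htop

lemma extTop_comp {n m : ℕ} {φ ψ : ℕ →. ℕ}
    (hφd : ∀ x, (φ x).Dom → x ≤ m) (hφr : ∀ x b, b ∈ φ x → b ≤ m) :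
    extTop n m (pcomp φ ψ) = pcomp (extTop n m φ) (extTop n m ψ) := by
  funext x
  apply Part.ext
  intro a
  have hc : ∀ (u v : ℕ →. ℕ) (z b : ℕ), b ∈ pcomp u v z ↔ ∃ e, e ∈ u z ∧ b ∈ v e := by
    intro u v z b
    rw [pcomp, PFun.comp_apply]; exact Part.mem_bind_iff
  by_cases htop : m + 2 ≤ x ∧ x ≤ n
  · rw [extTop, if_pos htop, hc, Part.mem_some_iff]
    constructor
    · intro h
      subst h
      refine ⟨a, ?_, ?_⟩ <;> (rw [extTop, if_pos htop]; exact Part.mem_some_iff.2 rfl)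
    · rintro ⟨e, he, ha⟩
      rw [extTop, if_pos htop, Part.mem_some_iff] at he
      subst he
      rw [extTop, if_pos htop, Part.mem_some_iff] at ha
      exact ha
  · rw [extTop, if_neg htop, hc, hc]
    constructor
    · rintro ⟨e, he, ha⟩
      refine ⟨e, ?_, ?_⟩
      · rw [extTop, if_neg htop]; exact he
      · have hbm : e ≤ m := hφr x e he
        rw [extTop, if_neg (by omega)]
        exact ha
    · rintro ⟨e, he, ha⟩
      rw [extTop, if_neg htop] at he
      have hbm : e ≤ m := hφr x e he
      rw [extTop, if_neg (by omega)] at ha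
      exact ⟨e, he, ha⟩

lemma emb {n m : ℕ} (hn : 3 ≤ n) (hm3 : 3 ≤ m) (hmn : m + 2 ≤ n) {φ : ℕ →. ℕ}
    (h : InClosure m (Agen m) φ) : InClosure n (Agen n) (extTop n m φ) := by
  induction h with
  | id =>
    have heq : extTop n m (PFun.res id (Set.Icc 1 m)) =
        idP n (fun x => x ≤ m ∨ m + 2 ≤ x) := by
      rw [res_id_eq, extTop_pmap (by omega), idP]
      apply pmap_ext
      · intro x; omega
      · intro x hx; split_ifs <;> omega
    rw [heq]; exact mem_idP hn _
  | mem hg =>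
    rcases hg with hg | ⟨i, hi1, hi2, rfl⟩
    · rw [Set.mem_singleton_iff] at hg; subst hg
      have heq : extTop n m (tauP m) =
          pcomp (idP n (fun x => x ≤ m ∨ m + 2 ≤ x)) (alphaStar n (m + 1)) := by
        rw [tauP_eq, extTop_pmap (by omega), idP, alphaStar_eq, pcomp_pmap]
        apply pmap_ext
        · intro x; omega
        · intro x hx; split_ifs <;> omega
      rw [heq]
      exact InClosure.comp (mem_idP hn _) (mem_alphaStar hn (by omega) (by omega))
    · by_cases hi : i + 2 ≤ m
      · have heq : extTop n m (alphaMap m i) =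
            pcomp (pcomp (pcomp (idP n (fun x => (x ≤ m ∧ x ≠ i) ∨ m + 2 ≤ x))
              (alphaStar n (m + 1))) (alphaStar n (m + 1 - i))) (alphaStar n (m + 1)) := by
          rw [alphaMap_eq, extTop_pmap (by omega), idP, alphaStar_eq, alphaStar_eq,
            pcomp_pmap, pcomp_pmap, pcomp_pmap]
          apply pmap_ext
          · intro x; split_ifs <;> omega
          · intro x hx; split_ifs at hx ⊢ <;> omega
        rw [heq]
        refine InClosure.comp (InClosure.comp (InClosure.comp (mem_idP hn _)
          (mem_alphaStar hn (by omega) (by omega))) (mem_alphaStar hn (by omega) (by omega)))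
          (mem_alphaStar hn (by omega) (by omega))
      · have hmi : m = 3 ∧ i = 2 := by
          by_cases h3 : m = 3
          · rw [if_pos h3] at hi2; omega
          · rw [if_neg h3] at hi2; omega
        obtain ⟨rfl, rfl⟩ := hmi
        have heq : extTop n 3 (alphaMap 3 2) =
            idP n (fun x => (x ≤ 3 ∧ x ≠ 2) ∨ 5 ≤ x) := by
          rw [alphaMap_eq, extTop_pmap (by omega), idP]
          apply pmap_ext
          · intro x; omega
          · intro x hx; split_ifs <;> omega
        rw [heq]; exact mem_idP hn _
  | @comp φ' ψ' h1 h2 ih1 ih2 =>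
    have hφaut := sound h1
    have heq := extTop_comp (n := n) (m := m) (φ := φ') (ψ := ψ')
      (fun x hx => by
        have := hφaut.1.dom_subset hx
        simp only [Set.mem_Icc] at this
        omega)
      (fun x b hb => by
        have := hφaut.1.ran_subset ⟨x, hb⟩
        simp only [Set.mem_Icc] at this
        omega)
    rw [heq]
    exact InClosure.comp ih1 ih2
lemma main : ∀ (n : ℕ), 3 ≤ n → ∀ f : ℕ →. ℕ, IsPAut n f → InClosure n (Agen n) f := by
  intro N
  induction N using Nat.strong_induction_on with
  | _ n IH =>
  intro hn f hf
  have hdomIcc : ∀ z, (f z).Dom → 1 ≤ z ∧ z ≤ n := by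
    intro z hz
    have := hf.1.dom_subset hz
    simpa [Set.mem_Icc] using this
  have hranIcc : ∀ z, (f z).Dom → 1 ≤ fval f z ∧ fval f z ≤ n := by
    intro z hz
    have := hf.1.ran_subset ⟨z, fval_mem hz⟩
    simpa [Set.mem_Icc] using this
  by_cases hne : ∃ x, (f x).Dom
  swap
  · -- empty map
    push_neg at hne
    have heq : f = idP n (fun _ => False) := by
      rw [canon f, idP]
      apply pmap_ext
      · intro x
        constructor
        · intro h; exact absurd h (hne x)
        · rintro ⟨-, h⟩; exact h.elim
      · rintro x ⟨-, h⟩; exact h.elim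
    rw [heq]; exact mem_idP hn _
  obtain ⟨w0, hw0⟩ := hne
  obtain ⟨x1, x2, c, r, hx11, hx1le, hx2n, hall, hx2top, hx1bot, hcr, hc1, hrn, haff,
    hmax, hout⟩ := top_block hf hw0
  by_cases hint : ∀ z, (f z).Dom → x1 ≤ z ∧ z ≤ x2
  · exact interval_case hn hx11 hx1le hx2n
      (fun y => ⟨fun h => hint y h, fun h => hall y h.1 h.2⟩) hcr hc1 hrn haff
  · push_neg at hint
    obtain ⟨z0, hz0, hz0out⟩ := hint
    have hz0o : z0 < x1 ∨ x2 < z0 := by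
      rcases Nat.lt_or_ge z0 x1 with h | h
      · exact Or.inl h
      · exact Or.inr (hz0out h)
    have hne1 : ∀ x, (f x).Dom → x ≠ x1 - 1 := by
      intro x hx hh; rw [hh] at hx; exact hx1bot hx
    have hne2 : ∀ x, (f x).Dom → x ≠ x2 + 1 := by
      intro x hx hh; rw [hh] at hx; exact hx2top hx
    set l := x2 - x1 + 1 with hl
    set mm := n - l - 1 with hmm
    have hz0c : fval f z0 + 2 ≤ c := hout z0 hz0 hz0o
    have hc3 : 3 ≤ c := by have := hranIcc z0 hz0; omega
    have hz0I := hdomIcc z0 hz0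
    have hlln : l ≤ n - 2 := by
      rcases hz0o with h | h
      · have h1 := hne1 z0 hz0; omega
      · have h1 := hne2 z0 hz0; omega
    have hrcl : c + l = r + 1 := by omega
    have hm2 : mm + 2 = n - l + 1 := by omega
    have hx1l : x1 + l = x2 + 1 := by omega
    have hout' : ∀ z, (f z).Dom → ¬ (x1 ≤ z ∧ z ≤ x2) → fval f z + 2 ≤ c := by
      intro z hz hzo
      have := hdomIcc z hz
      exact hout z hz (by omega)
    -- the g word
    have hgmem : InClosure n (Agen n)
        (pmap (fun x => (f x).Dom) (fun x => if x < x1 then x else n + x1 - x)) := by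
      by_cases hx1n : x1 = n
      · have heq : pmap (fun x => (f x).Dom) (fun x => if x < x1 then x else n + x1 - x)
            = idP n (fun x => (f x).Dom) := by
          rw [idP]
          apply pmap_ext
          · intro x
            constructor
            · intro hx; exact ⟨hdomIcc x hx, hx⟩
            · rintro ⟨-, hx⟩; exact hx
          · rintro x ⟨hxI, hx⟩
            split_ifs <;> omega
        rw [heq]; exact mem_idP hn _
      · have heq : pmap (fun x => (f x).Dom) (fun x => if x < x1 then x else n + x1 - x)
            = pcomp (idP n (fun x => (f x).Dom)) (flipAt n (x1 - 1)) := by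
          rw [idP, flipAt, pcomp_pmap]
          apply pmap_ext
          · intro x
            constructor
            · intro hx
              have hxI := hdomIcc x hx
              exact ⟨⟨hxI, hx⟩, ⟨hxI.1, hxI.2⟩, hne1 x hx⟩
            · rintro ⟨⟨-, hx⟩, -⟩; exact hx
          · rintro x ⟨⟨hxI, hx⟩, -, hnn⟩
            split_ifs <;> omega
        rw [heq]
        exact InClosure.comp (mem_idP hn _) (mem_flipAt hn (by omega))
    -- involution property
    have hGG : ∀ x, (f x).Dom →
        (if (if x < x1 then x else n + x1 - x) < x1 then (if x < x1 then x else n + x1 - x)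
          else n + x1 - (if x < x1 then x else n + x1 - x)) = x := by
      intro x hx
      have hxI := hdomIcc x hx
      by_cases h : x < x1
      · rw [if_pos h, if_pos h]
      · rw [if_neg h, if_neg (by omega : ¬ (n + x1 - x < x1))]
        omega
    have hGbound : ∀ x, (f x).Dom → 1 ≤ (if x < x1 then x else n + x1 - x) ∧
        (if x < x1 then x else n + x1 - x) ≤ n := by
      intro x hx
      have hxI := hdomIcc x hx
      split_ifs <;> omega
    -- the mid-map: g followed by Φ
    have hmid : pcomp (pmap (fun x => (f x).Dom) (fun x => if x < x1 then x else n + x1 - x))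
        (pmap (fun y => (1 ≤ y ∧ y ≤ n) ∧ (f (if y < x1 then y else n + x1 - y)).Dom)
          (fun y => if mm + 2 ≤ y then y else fval f (if y < x1 then y else n + x1 - y)))
        = pmap (fun x => (f x).Dom)
            (fun x => if x1 ≤ x ∧ x ≤ x2 then n + x1 - x else fval f x) := by
      rw [pcomp_pmap]
      apply pmap_ext
      · intro x
        constructor
        · rintro ⟨hx, -⟩; exact hx
        · intro hx
          refine ⟨hx, hGbound x hx, ?_⟩
          rw [hGG x hx]; exact hx
      · intro x hx
        have hxI := hdomIcc x hx
        rw [hGG x hx]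
        by_cases hin : x1 ≤ x ∧ x ≤ x2
        · rw [if_pos hin, if_neg (by omega : ¬ x < x1),
            if_pos (by omega : mm + 2 ≤ n + x1 - x)]
        · rw [if_neg hin]
          by_cases h : x < x1
          · rw [if_pos h, if_neg (by have := hne1 x hx; omega : ¬ mm + 2 ≤ x)]
          · have h2x : x2 + 2 ≤ x := by have := hne2 x hx; omega
            rw [if_neg h, if_neg (by omega : ¬ mm + 2 ≤ n + x1 - x)]
    -- Φ "top" facts
    have hm1not : ¬ ((1 ≤ mm + 1 ∧ mm + 1 ≤ n) ∧
        (f (if mm + 1 < x1 then mm + 1 else n + x1 - (mm + 1))).Dom) := by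
      rintro ⟨hI, hd⟩
      by_cases hca : mm + 1 < x1
      · rw [if_pos hca] at hd
        have he : mm + 1 = x1 - 1 := by omega
        rw [he] at hd
        exact hx1bot hd
      · rw [if_neg hca] at hd
        have he : n + x1 - (mm + 1) = x2 + 1 := by omega
        rw [he] at hd
        exact hx2top hd
    have htopdom : ∀ y, mm + 2 ≤ y → y ≤ n →
        (f (if y < x1 then y else n + x1 - y)).Dom := by
      intro y h1 h2
      rw [if_neg (by omega : ¬ y < x1)]
      exact hall _ (by omega) (by omega)
    -- value bound for low points
    have hlowv : ∀ y, (1 ≤ y ∧ y ≤ n) → y ≤ mm →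
        (f (if y < x1 then y else n + x1 - y)).Dom →
        1 ≤ fval f (if y < x1 then y else n + x1 - y) ∧
        fval f (if y < x1 then y else n + x1 - y) + 2 ≤ c := by
      intro y hyI hym hd
      by_cases h : y < x1
      · rw [if_pos h] at hd ⊢
        exact ⟨(hranIcc y hd).1, hout' y hd (by have := hne1 y hd; omega)⟩
      · rw [if_neg h] at hd ⊢
        refine ⟨(hranIcc _ hd).1, hout' _ hd (by omega)⟩
    -- low-point injectivity helper
    have hGinj : ∀ y y', (1 ≤ y ∧ y ≤ n) → (1 ≤ y' ∧ y' ≤ n) →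
        (if y < x1 then y else n + x1 - y) = (if y' < x1 then y' else n + x1 - y') →
        y = y' := by
      intro y y' hy hy' h
      split_ifs at h <;> omega
    -- φ is a partial automorphism of P_mm
    have hφaut : IsPAut mm (pmap
        (fun y => ((1 ≤ y ∧ y ≤ n) ∧ (f (if y < x1 then y else n + x1 - y)).Dom) ∧ y ≤ mm)
        (fun y => if mm + 2 ≤ y then y else fval f (if y < x1 then y else n + x1 - y))) := by
      apply isPAut_pmap
      · rintro y ⟨⟨hyI, hyd⟩, hym⟩
        have hv := hlowv y hyI hym hyd
        rw [if_neg (by omega : ¬ mm + 2 ≤ y)]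
        refine ⟨by omega, hym, hv.1, by omega⟩
      · rintro y y' ⟨⟨hyI, hyd⟩, hym⟩ ⟨⟨hyI', hyd'⟩, hym'⟩ hvv
        rw [if_neg (by omega : ¬ mm + 2 ≤ y), if_neg (by omega : ¬ mm + 2 ≤ y')] at hvv
        have hGeq := hf.1.inj (a := fval f (if y < x1 then y else n + x1 - y))
          (fval_mem hyd) (by rw [hvv]; exact fval_mem hyd')
        exact hGinj y y' hyI hyI' hGeq
      · rintro y y' ⟨⟨hyI, hyd⟩, hym⟩ ⟨⟨hyI', hyd'⟩, hym'⟩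
        rw [if_neg (by omega : ¬ mm + 2 ≤ y), if_neg (by omega : ¬ mm + 2 ≤ y')]
        have hstep2 : adj (if y < x1 then y else n + x1 - y)
            (if y' < x1 then y' else n + x1 - y') ↔
            adj (fval f (if y < x1 then y else n + x1 - y))
              (fval f (if y' < x1 then y' else n + x1 - y')) :=
          ⟨fun h => hf.1.edge (fval_mem hyd) (fval_mem hyd') h,
           fun h => hf.2 (fval_mem hyd) (fval_mem hyd') h⟩
        rw [← hstep2]
        -- G preserves adjacency on low points
        by_cases h : y < x1 <;> by_cases h' : y' < x1
        · rw [if_pos h, if_pos h']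
        · rw [if_pos h, if_neg h']
          have hy1 : y ≠ x1 - 1 := by
            intro hh; rw [if_pos h, hh] at hyd; exact hx1bot hyd
          unfold adj
          omega
        · rw [if_neg h, if_pos h']
          have hy1 : y' ≠ x1 - 1 := by
            intro hh; rw [if_pos h', hh] at hyd'; exact hx1bot hyd'
          unfold adj
          omega
        · rw [if_neg h, if_neg h']
          unfold adj
          omega
    -- Φ = extTop of φ
    have hφext : pmap (fun y => (1 ≤ y ∧ y ≤ n) ∧ (f (if y < x1 then y else n + x1 - y)).Dom)
          (fun y => if mm + 2 ≤ y then y else fval f (if y < x1 then y else n + x1 - y))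
        = extTop n mm (pmap
          (fun y => ((1 ≤ y ∧ y ≤ n) ∧ (f (if y < x1 then y else n + x1 - y)).Dom) ∧ y ≤ mm)
          (fun y => if mm + 2 ≤ y then y else fval f (if y < x1 then y else n + x1 - y))) := by
      rw [extTop_pmap (fun y hy => hy.2)]
      apply pmap_ext
      · intro y
        constructor
        · intro hy
          by_cases hy1 : y = mm + 1
          · subst hy1; exact absurd hy hm1not
          · rcases Nat.lt_or_ge y (mm + 1) with h | h
            · exact Or.inl ⟨hy, by omega⟩
            · exact Or.inr ⟨by omega, hy.1.2⟩
        · rintro (⟨hy, -⟩ | hy)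
          · exact hy
          · exact ⟨⟨by omega, hy.2⟩, htopdom y hy.1 hy.2⟩
      · intro y hy
        by_cases h : y ≤ mm
        · rw [if_pos h]
        · rw [if_neg h]
          have htop : mm + 2 ≤ y := by
            rcases hy with ⟨-, h'⟩ | hy'
            · omega
            · exact hy'.1
          rw [if_pos htop]
    -- Φ is in the closure
    have hΦmem : InClosure n (Agen n)
        (pmap (fun y => (1 ≤ y ∧ y ≤ n) ∧ (f (if y < x1 then y else n + x1 - y)).Dom)
          (fun y => if mm + 2 ≤ y then y else fval f (if y < x1 then y else n + x1 - y))) := by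
      by_cases hmm3 : 3 ≤ mm
      · have hφcl := IH mm (by omega) hmm3 _ hφaut
        rw [hφext]
        exact emb hn hmm3 (by omega) hφcl
      · -- tiny middle: mm ≤ 2
        have hcmm : c ≤ mm + 2 := by omega
        by_cases hsw : ∃ y, (((1 ≤ y ∧ y ≤ n) ∧
            (f (if y < x1 then y else n + x1 - y)).Dom) ∧ y ≤ mm) ∧
            ¬ (fval f (if y < x1 then y else n + x1 - y) = y)
        · -- a swapped low point exists : mm = 2 and everything low is swapped
          obtain ⟨y0, ⟨⟨hy0I, hy0d⟩, hy0m⟩, hy0s⟩ := hsw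
          have hv0 := hlowv y0 hy0I hy0m hy0d
          have hmm2 : mm = 2 := by omega
          have hall2 : ∀ y, (1 ≤ y ∧ y ≤ n) →
              (f (if y < x1 then y else n + x1 - y)).Dom → y ≤ mm →
              fval f (if y < x1 then y else n + x1 - y) = 3 - y := by
            intro y hyI hyd hym
            have hv := hlowv y hyI hym hyd
            by_cases hyy0 : y = y0
            · subst hyy0; omega
            · have hvne : fval f (if y < x1 then y else n + x1 - y) ≠
                  fval f (if y0 < x1 then y0 else n + x1 - y0) := by
                intro hh
                have hGeq := hf.1.inj (a := fval f (if y < x1 then y else n + x1 - y))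
                  (fval_mem hyd) (by rw [hh]; exact fval_mem hy0d)
                exact hyy0 (hGinj y y0 hyI hy0I hGeq)
              omega
          have heqsw : pmap
              (fun y => (1 ≤ y ∧ y ≤ n) ∧ (f (if y < x1 then y else n + x1 - y)).Dom)
              (fun y => if mm + 2 ≤ y then y else fval f (if y < x1 then y else n + x1 - y))
              = pcomp (idP n (fun y => (f (if y < x1 then y else n + x1 - y)).Dom))
                  (alphaStar n 3) := by
            rw [idP, alphaStar_eq, pcomp_pmap]
            apply pmap_ext
            · intro y
              constructor
              · rintro ⟨hyI, hyd⟩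
                have hy3 : y ≠ 3 := by
                  intro hh
                  subst hh
                  exact hm1not ⟨by omega, by
                    have : mm + 1 = 3 := by omega
                    rw [this]; exact hyd⟩
                exact ⟨⟨hyI, hyd⟩, ⟨hyI.1, hyI.2⟩, hy3⟩
              · rintro ⟨⟨hyI, hyd⟩, -⟩; exact ⟨hyI, hyd⟩
            · rintro y ⟨⟨hyI, hyd⟩, -, hy3⟩
              by_cases h : y ≤ mm
              · rw [if_neg (by omega : ¬ mm + 2 ≤ y), if_pos (by omega : y < 3),
                  hall2 y hyI hyd h]
              · have htop : mm + 2 ≤ y := by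
                  by_contra hc
                  have : y = mm + 1 := by omega
                  subst this
                  exact hm1not ⟨hyI, hyd⟩
                rw [if_pos htop, if_neg (by omega : ¬ y < 3)]
          rw [heqsw]
          exact InClosure.comp (mem_idP hn _) (mem_alphaStar hn le_rfl (by omega))
        · -- no swapped point: Φ is a partial identity
          push_neg at hsw
          have heqid : pmap
              (fun y => (1 ≤ y ∧ y ≤ n) ∧ (f (if y < x1 then y else n + x1 - y)).Dom)
              (fun y => if mm + 2 ≤ y then y else fval f (if y < x1 then y else n + x1 - y))
              = idP n (fun y => (f (if y < x1 then y else n + x1 - y)).Dom) := by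
            rw [idP]
            apply pmap_ext
            · intro y; exact Iff.rfl
            · rintro y ⟨hyI, hyd⟩
              by_cases h : y ≤ mm
              · rw [if_neg (by omega : ¬ mm + 2 ≤ y)]
                exact hsw y ⟨⟨hyI, hyd⟩, h⟩
              · have htop : mm + 2 ≤ y := by
                  by_contra hc
                  have : y = mm + 1 := by omega
                  subst this
                  exact hm1not ⟨hyI, hyd⟩
                rw [if_pos htop]
          rw [heqid]
          exact mem_idP hn _
    -- final assembly
    rcases haff with Ha | ⟨hx1lt, Hd⟩
    · by_cases hcn : c = n
      · -- the top block is a single point going to n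
        have hx21 : x2 = x1 := by omega
        have hfeq : f = pcomp
            (pmap (fun x => (f x).Dom) (fun x => if x < x1 then x else n + x1 - x))
            (pmap (fun y => (1 ≤ y ∧ y ≤ n) ∧ (f (if y < x1 then y else n + x1 - y)).Dom)
              (fun y => if mm + 2 ≤ y then y else
                fval f (if y < x1 then y else n + x1 - y))) := by
          rw [hmid]
          conv_lhs => rw [canon f]
          apply pmap_ext
          · intro x; exact Iff.rfl
          · intro x hx
            by_cases hin : x1 ≤ x ∧ x ≤ x2
            · rw [if_pos hin]
              have := Ha x (by omega) (by omega)
              omega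
            · rw [if_neg hin]
        rw [hfeq]
        exact InClosure.comp hgmem hΦmem
      · -- increasing : one final reflection at c-1
        have hfeq : f = pcomp (pcomp
            (pmap (fun x => (f x).Dom) (fun x => if x < x1 then x else n + x1 - x))
            (pmap (fun y => (1 ≤ y ∧ y ≤ n) ∧ (f (if y < x1 then y else n + x1 - y)).Dom)
              (fun y => if mm + 2 ≤ y then y else
                fval f (if y < x1 then y else n + x1 - y))))
            (flipAt n (c - 1)) := by
          rw [hmid, flipAt, pcomp_pmap]
          conv_lhs => rw [canon f]
          apply pmap_ext
          · intro x
            constructor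
            · intro hx
              have hxI := hdomIcc x hx
              refine ⟨hx, ?_⟩
              by_cases hin : x1 ≤ x ∧ x ≤ x2
              · rw [if_pos hin]
                refine ⟨⟨by omega, by omega⟩, by omega⟩
              · rw [if_neg hin]
                have hb := hout' x hx hin
                have := hranIcc x hx
                refine ⟨⟨by omega, by omega⟩, by omega⟩
            · rintro ⟨hx, -⟩; exact hx
          · rintro x ⟨hx, -⟩
            have hxI := hdomIcc x hx
            by_cases hin : x1 ≤ x ∧ x ≤ x2
            · rw [if_pos hin, if_neg (by omega : ¬ n + x1 - x < c - 1)]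
              have := Ha x (by omega) (by omega)
              omega
            · rw [if_neg hin]
              have hb := hout' x hx hin
              rw [if_pos (by omega : fval f x < c - 1)]
        rw [hfeq]
        exact InClosure.comp (InClosure.comp hgmem hΦmem) (mem_flipAt hn (by omega))
    · -- decreasing : reflections at n-l and c-1
      have hcn : c < n := by omega
      have hfeq : f = pcomp (pcomp (pcomp
          (pmap (fun x => (f x).Dom) (fun x => if x < x1 then x else n + x1 - x))
          (pmap (fun y => (1 ≤ y ∧ y ≤ n) ∧ (f (if y < x1 then y else n + x1 - y)).Dom)
            (fun y => if mm + 2 ≤ y then y else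
              fval f (if y < x1 then y else n + x1 - y))))
          (flipAt n (n - l))) (flipAt n (c - 1)) := by
        rw [hmid, flipAt, flipAt, pcomp_pmap, pcomp_pmap]
        conv_lhs => rw [canon f]
        apply pmap_ext
        · intro x
          constructor
          · intro hx
            have hxI := hdomIcc x hx
            refine ⟨⟨hx, ?_⟩, ?_⟩
            · by_cases hin : x1 ≤ x ∧ x ≤ x2
              · rw [if_pos hin]
                refine ⟨⟨by omega, by omega⟩, by omega⟩
              · rw [if_neg hin]
                have hb := hout' x hx hin
                have := hranIcc x hx
                refine ⟨⟨by omega, by omega⟩, by omega⟩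
            · by_cases hin : x1 ≤ x ∧ x ≤ x2
              · rw [if_pos hin, if_neg (by omega : ¬ n + x1 - x < n - l)]
                refine ⟨⟨by omega, by omega⟩, by omega⟩
              · rw [if_neg hin]
                have hb := hout' x hx hin
                have := hranIcc x hx
                rw [if_pos (by omega : fval f x < n - l)]
                refine ⟨⟨by omega, by omega⟩, by omega⟩
          · rintro ⟨⟨hx, -⟩, -⟩; exact hx
        · rintro x ⟨⟨hx, -⟩, -⟩
          have hxI := hdomIcc x hx
          by_cases hin : x1 ≤ x ∧ x ≤ x2
          · rw [if_pos hin, if_neg (by omega : ¬ n + x1 - x < n - l),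
              if_neg (by omega : ¬ n + (n - l) + 1 - (n + x1 - x) < c - 1)]
            have := Hd x (by omega) (by omega)
            omega
          · rw [if_neg hin]
            have hb := hout' x hx hin
            have := hranIcc x hx
            rw [if_pos (by omega : fval f x < n - l), if_pos (by omega : fval f x < c - 1)]
      rw [hfeq]
      exact InClosure.comp (InClosure.comp (InClosure.comp hgmem hΦmem)
        (mem_flipAt hn (by omega))) (mem_flipAt hn (by omega))

theorem stmt17 (n : ℕ) (hn : 3 ≤ n) :
    ∀ f : ℕ →. ℕ, IsPAut n f ↔ InClosure n (Agen n) f := by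
  intro f
  exact ⟨main n hn f, sound⟩
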